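/- Let S be a semigroup, I a left ideal of S (s·a ∈ I for all s ∈ S, a ∈ I), and e ∈ S an element commuting with every element of I such that ea ≠ a for some a ∈ I. Then S is not an equational domain: the set M = {(x_1,x_2) ∈ S^2 : x_1 = a or x_2 = a} is not algebraic over S. (Key computation: for any equation t = s with constants, the values at (ea,a), (a,ea), (a,a) being equal forces equality at (ea,ea) as well.) -/

import Mathlib

namespace Stmt

/-- Evaluation of a single letter (variable or constant). -/
def evalL {S : Type*} {n : ℕ} (p : Fin n → S) : Fin n ⊕ S → S
  | Sum.inl i => p i
  | Sum.inr s => s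

/-- A semigroup term with constants: a nonempty word in variables `x₁,…,xₙ`
and constants from `S` (head letter together with the remaining letters). -/
abbrev SgTerm (S : Type*) (n : ℕ) : Type _ := (Fin n ⊕ S) × List (Fin n ⊕ S)

/-- Value of a term at a point, w.r.t. an explicit binary operation `mul`. -/
def SgTerm.eval {S : Type*} {n : ℕ} (mul : S → S → S) (t : SgTerm S n)
    (p : Fin n → S) : S :=
  t.2.foldl (fun a l => mul a (evalL p l)) (evalL p t.1)

/-- `Y ⊆ Sⁿ` is algebraic: it is the solution set of a system of equations
`t(X) = s(X)` between semigroup terms with constants. -/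
def IsAlgebraic {S : Type*} {n : ℕ} (mul : S → S → S) (Y : Set (Fin n → S)) : Prop :=
  ∃ Sys : Set (SgTerm S n × SgTerm S n),
    Y = {p | ∀ e ∈ Sys, SgTerm.eval mul e.1 p = SgTerm.eval mul e.2 p}

/-- `S` is an equational domain: every finite union of algebraic sets is algebraic. -/
def IsEqDomain (S : Type*) (mul : S → S → S) : Prop :=
  ∀ (n m : ℕ) (Y : Fin m → Set (Fin n → S)),
    (∀ i, IsAlgebraic mul (Y i)) → IsAlgebraic mul (⋃ i, Y i)

def act {S : Type*} [Mul S] (e : S) (k : ℕ) (x : S) : S := (fun y => e * y)^[k] x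

lemma act_succ {S : Type*} [Mul S] (e : S) (k : ℕ) (x : S) :
    act e (k+1) x = act e k (e * x) :=
  Function.iterate_succ_apply _ _ _

lemma act_succ' {S : Type*} [Mul S] (e : S) (k : ℕ) (x : S) :
    act e (k+1) x = e * act e k x :=
  Function.iterate_succ_apply' _ _ _

lemma act_mul {S : Type*} [Semigroup S] (e : S) (k : ℕ) (x z : S) :
    act e k x * z = act e k (x * z) := by
  induction k with
  | zero => rfl
  | succ k ih => rw [act_succ', act_succ', mul_assoc, ih]

lemma act_add {S : Type*} [Mul S] (e : S) (m n : ℕ) (x : S) :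
    act e (m+n) x = act e m (act e n x) :=
  Function.iterate_add_apply _ _ _ _

lemma fold_key {S : Type*} [Semigroup S] (I : Set S)
    (hI : ∀ s : S, ∀ a ∈ I, s * a ∈ I)
    (e : S) (hcomm : ∀ a ∈ I, e * a = a * e)
    (a : S) (ha : a ∈ I)
    (L : List (Fin 2 ⊕ S)) :
    ∃ k1 k2 : ℕ, ∀ (b : Fin 2 → Bool) (k : ℕ) (acc : S),
      L.foldl (fun x l => x * evalL (fun i => if b i then e * a else a) l) (act e k acc)
        = act e (k + k1 * (b 0).toNat + k2 * (b 1).toNat)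
            (L.foldl (fun x l => x * evalL (fun _ => a) l) acc) := by
  have hpull : ∀ u : S, u * (e * a) = e * (u * a) := fun u => by
    rw [hcomm a ha, ← mul_assoc, hcomm (u * a) (hI u a ha)]
  induction L with
  | nil => exact ⟨0, 0, fun b k acc => by simp⟩
  | cons l L ih =>
    obtain ⟨k1, k2, h⟩ := ih
    rcases l with i | s
    · refine ⟨k1 + (if i = 0 then 1 else 0), k2 + (if i = 1 then 1 else 0),
        fun b k acc => ?_⟩
      simp only [evalL] at h
      rcases hb : b i with _ | _
      · simp only [List.foldl_cons, evalL, hb, if_false, Bool.false_eq_true]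
        rw [act_mul, h b k (acc * a)]
        congr 1
        fin_cases i <;> simp_all [Bool.toNat] <;> ring
      · simp only [List.foldl_cons, evalL, hb, if_true]
        rw [act_mul, hpull, ← act_succ, h b (k+1) (acc * a)]
        congr 1
        fin_cases i <;> simp_all [Bool.toNat] <;> ring
    · refine ⟨k1, k2, fun b k acc => ?_⟩
      simp only [evalL] at h
      simp only [List.foldl_cons, evalL]
      rw [act_mul, h b k (acc * s)]

lemma term_key {S : Type*} [Semigroup S] (I : Set S)
    (hI : ∀ s : S, ∀ a ∈ I, s * a ∈ I)
    (e : S) (hcomm : ∀ a ∈ I, e * a = a * e)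
    (a : S) (ha : a ∈ I)
    (t : SgTerm S 2) :
    ∃ k1 k2 : ℕ, ∀ b : Fin 2 → Bool,
      SgTerm.eval (· * ·) t (fun i => if b i then e * a else a)
        = act e (k1 * (b 0).toNat + k2 * (b 1).toNat)
            (SgTerm.eval (· * ·) t (fun _ => a)) := by
  obtain ⟨k1, k2, h⟩ := fold_key I hI e hcomm a ha t.2
  rcases ht : t.1 with i | s
  · refine ⟨k1 + (if i = 0 then 1 else 0), k2 + (if i = 1 then 1 else 0), fun b => ?_⟩
    unfold SgTerm.eval
    rw [ht]
    rcases hb : b i with _ | _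
    · have h1 : evalL (fun i => if b i then e * a else a) (Sum.inl i) = act e 0 a := by
        simp [evalL, hb, act]
      have h2 : evalL (fun _ : Fin 2 => a) (Sum.inl i) = a := rfl
      rw [h1, h2, h b 0 a]
      congr 1
      fin_cases i <;> simp_all [Bool.toNat] <;> ring
    · have h1 : evalL (fun i => if b i then e * a else a) (Sum.inl i) = act e 1 a := by
        simp [evalL, hb, act]
      have h2 : evalL (fun _ : Fin 2 => a) (Sum.inl i) = a := rfl
      rw [h1, h2, h b 1 a]
      congr 1
      fin_cases i <;> simp_all [Bool.toNat] <;> ring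
  · refine ⟨k1, k2, fun b => ?_⟩
    unfold SgTerm.eval
    rw [ht]
    have h1 : evalL (fun i => if b i then e * a else a) (Sum.inr s) = act e 0 s := rfl
    have h2 : evalL (fun _ : Fin 2 => a) (Sum.inr s) = s := rfl
    rw [h1, h2, h b 0 s, zero_add]

/-- Let `I` be a left ideal of a semigroup `S` and `e ∈ S` an element commuting
with every element of `I` such that `e·a ≠ a` for some `a ∈ I`. Then the set
`{(x₁,x₂) : x₁ = a or x₂ = a}` is not algebraic and `S` is not an equational
domain. -/
theorem not_eqDomain_of_left_ideal_commuting_element (S : Type*) [Semigroup S]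
    (I : Set S) (hI : ∀ s : S, ∀ a ∈ I, s * a ∈ I)
    (e : S) (hcomm : ∀ a ∈ I, e * a = a * e)
    (a : S) (ha : a ∈ I) (hea : e * a ≠ a) :
    ¬ IsAlgebraic (· * ·) {p : Fin 2 → S | p 0 = a ∨ p 1 = a} ∧
    ¬ IsEqDomain S (· * ·) := by
  have hAlg : ¬ IsAlgebraic (· * ·) {p : Fin 2 → S | p 0 = a ∨ p 1 = a} := by
    rintro ⟨Sys, hSys⟩
    set P : (Fin 2 → Bool) → (Fin 2 → S) := fun b i => if b i then e * a else a with hP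
    have hmem : ∀ b : Fin 2 → Bool, (P b 0 = a ∨ P b 1 = a) →
        ∀ eq ∈ Sys, SgTerm.eval (· * ·) eq.1 (P b) = SgTerm.eval (· * ·) eq.2 (P b) := by
      intro b hb
      have : P b ∈ {p : Fin 2 → S | p 0 = a ∨ p 1 = a} := hb
      rw [hSys] at this
      exact this
    have h10 := hmem ![true, false] (by simp [hP])
    have h01 := hmem ![false, true] (by simp [hP])
    have h00 := hmem ![false, false] (by simp [hP])
    have h11 : ∀ eq ∈ Sys, SgTerm.eval (· * ·) eq.1 (P ![true, true])
        = SgTerm.eval (· * ·) eq.2 (P ![true, true]) := by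
      intro eq heq
      obtain ⟨k1, k2, hk⟩ := term_key I hI e hcomm a ha eq.1
      obtain ⟨l1, l2, hl⟩ := term_key I hI e hcomm a ha eq.2
      set T := SgTerm.eval (· * ·) eq.1 (fun _ : Fin 2 => a) with hT
      set U := SgTerm.eval (· * ·) eq.2 (fun _ : Fin 2 => a) with hU
      have e00 : T = U := by
        have := h00 eq heq
        rw [show P ![false, false] = (fun i => if (![false, false] : Fin 2 → Bool) i
          then e * a else a) from rfl, hk, hl] at this
        simpa [act] using this
      have e10 : act e k1 T = act e l1 U := by
        have := h10 eq heq
        rw [show P ![true, false] = (fun i => if (![true, false] : Fin 2 → Bool) i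
          then e * a else a) from rfl, hk, hl] at this
        simpa using this
      have e01 : act e k2 T = act e l2 U := by
        have := h01 eq heq
        rw [show P ![false, true] = (fun i => if (![false, true] : Fin 2 → Bool) i
          then e * a else a) from rfl, hk, hl] at this
        simpa using this
      have key : act e (k1 + k2) T = act e (l1 + l2) U := by
        calc act e (k1 + k2) T = act e k1 (act e k2 T) := act_add _ _ _ _
        _ = act e k1 (act e l2 U) := by rw [e01]
        _ = act e k1 (act e l2 T) := by rw [e00]
        _ = act e l2 (act e k1 T) := by rw [← act_add, ← act_add, Nat.add_comm]
        _ = act e l2 (act e l1 U) := by rw [e10]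
        _ = act e (l1 + l2) U := by rw [← act_add, Nat.add_comm]
      rw [show P ![true, true] = (fun i => if (![true, true] : Fin 2 → Bool) i
          then e * a else a) from rfl, hk, hl]
      simpa using key
    have : P ![true, true] ∈ {p : Fin 2 → S | p 0 = a ∨ p 1 = a} := by
      rw [hSys]; exact h11
    rcases this with h | h <;> exact hea (by simpa [hP] using h)
  refine ⟨hAlg, fun hED => hAlg ?_⟩
  have h0 : IsAlgebraic (· * ·) {p : Fin 2 → S | p 0 = a} := by
    refine ⟨{((Sum.inl 0, []), (Sum.inr a, []))}, ?_⟩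
    ext p
    simp [SgTerm.eval, evalL]
  have h1 : IsAlgebraic (· * ·) {p : Fin 2 → S | p 1 = a} := by
    refine ⟨{((Sum.inl 1, []), (Sum.inr a, []))}, ?_⟩
    ext p
    simp [SgTerm.eval, evalL]
  have := hED 2 2 ![{p : Fin 2 → S | p 0 = a}, {p : Fin 2 → S | p 1 = a}]
    (by intro i; fin_cases i <;> simpa)
  have hunion : (⋃ i, (![{p : Fin 2 → S | p 0 = a}, {p : Fin 2 → S | p 1 = a}] : Fin 2 → _) i)
      = {p : Fin 2 → S | p 0 = a ∨ p 1 = a} := by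
    ext p
    simp [Fin.exists_fin_two]
  rwa [hunion] at this

end Stmt
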